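/- Under the hypotheses of the majorization lemma above (Gaussian vector with error variances ω_j^ι weakly increasing in the identity ordering), for every permutation σ one has ∑_j ω_j^σ ≥ ∑_j ω_j^ι; i.e., the identity ordering minimizes the trace of the error-variance matrix over all orderings. -/

import Mathlib

open Matrix BigOperators

/-- Conditional variance of coordinate `j` of a centered Gaussian vector with covariance `S`,
given the coordinates in the index set `A`, i.e. the Schur complement
`S j j - S_{jA} (S_{AA})⁻¹ S_{Aj}`. -/
noncomputable def condVar {p : ℕ} (S : Matrix (Fin p) (Fin p) ℝ) (j : Fin p)
    (A : Finset (Fin p)) : ℝ :=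
  S j j - ∑ s : A, ∑ t : A,
    S j s.1 * (Matrix.of fun a b : A => S a.1 b.1)⁻¹ s t * S t.1 j

/-- The set of predecessors of node `j` under the ordering `σ`. -/
def PRED {p : ℕ} (σ : Equiv.Perm (Fin p)) (j : Fin p) : Finset (Fin p) :=
  Finset.univ.filter fun i => σ.symm i < σ.symm j

open Finset

namespace Stmt10Aux

variable {p : ℕ} (S : Matrix (Fin p) (Fin p) ℝ) (A : Finset (Fin p))

noncomputable def subM : Matrix A A ℝ := Matrix.of fun a b : A => S a.1 b.1

variable {S}

lemma symmApp (hS : S.IsHermitian) (i j : Fin p) : S i j = S j i := by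
  have := congrFun (congrFun hS j) i
  simpa [conjTranspose_apply] using this

/-- extend a vector on `A` by zero -/
def pad (x : A → ℝ) : Fin p → ℝ := fun i => if h : i ∈ A then x ⟨i, h⟩ else 0

lemma sum_pad (f : Fin p → ℝ) (x : A → ℝ) :
    ∑ i, f i * pad A x i = ∑ a : A, f a.1 * x a := by
  have : ∀ a : ↥A, f a.1 * x a = (fun i => f i * pad A x i) a.1 := by
    intro a; simp [pad, a.2]
  rw [Finset.sum_congr rfl (fun a _ => this a), Finset.sum_coe_sort A (fun i => f i * pad A x i)]
  exact (Finset.sum_subset (A.subset_univ) (by intro j _ hj; simp [pad, hj])).symm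

lemma subM_posDef (hS : S.PosDef) : (subM S A).PosDef := by
  refine posDef_iff_dotProduct_mulVec.mpr ⟨?_, ?_⟩
  · ext a b
    simp [subM, conjTranspose_apply, symmApp hS.1 b.1 a.1]
  · intro x hx
    have hyne : pad A x ≠ 0 := by
      intro h
      apply hx
      funext a
      have := congrFun h a.1
      simpa [pad, a.2] using this
    have key : dotProduct (star x) ((subM S A) *ᵥ x) = dotProduct (star (pad A x)) (S *ᵥ (pad A x)) := by
      simp only [dotProduct, mulVec, star_trivial, dotProduct]
      have inner : ∀ i, ∑ j, S i j * pad A x j = ∑ b : A, S i b.1 * x b := by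
        intro i; exact sum_pad A (fun j => S i j) x
      calc ∑ a : A, x a * ∑ b : A, subM S A a b * x b
          = ∑ a : A, (fun i => (∑ j, S i j * pad A x j) * pad A x i) a.1 := by
            apply Finset.sum_congr rfl
            intro a _
            simp only [subM, of_apply, pad, a.2, dif_pos]
            rw [mul_comm]
            congr 1
            exact (inner a.1).symm
        _ = ∑ i, (∑ j, S i j * pad A x j) * pad A x i := by
            rw [Finset.sum_coe_sort A (fun i => (∑ j, S i j * pad A x j) * pad A x i)]
            exact Finset.sum_subset (A.subset_univ) (by intro j _ hj; simp [pad, hj])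
        _ = ∑ i, pad A x i * ∑ j, S i j * pad A x j := by
            exact Finset.sum_congr rfl (fun i _ => mul_comm _ _)
    rw [key]
    exact hS.dotProduct_mulVec_pos hyne

end Stmt10Aux

namespace Stmt10Aux

variable {p : ℕ} {S : Matrix (Fin p) (Fin p) ℝ} (A : Finset (Fin p))

/-- regression coefficients -/
noncomputable def wCoef (S : Matrix (Fin p) (Fin p) ℝ) (A : Finset (Fin p)) (j : Fin p) :
    A → ℝ := fun a => -(∑ t : A, (subM S A)⁻¹ a t * S t.1 j)

/-- the residual vector: `e_j` minus regression of `X_j` on `X_A` -/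
noncomputable def uVec (S : Matrix (Fin p) (Fin p) ℝ) (A : Finset (Fin p)) (j : Fin p) :
    Fin p → ℝ := fun i => (Pi.single j 1 : Fin p → ℝ) i + pad A (wCoef S A j) i

lemma uVec_self {A : Finset (Fin p)} {j : Fin p} (hj : j ∉ A) : uVec S A j j = 1 := by
  simp [uVec, pad, hj]

lemma uVec_zero {A : Finset (Fin p)} {i j : Fin p} (hi : i ≠ j) (hiA : i ∉ A) :
    uVec S A j i = 0 := by
  simp [uVec, pad, hiA, Pi.single_apply, hi]

lemma mulVec_uVec (hS : S.PosDef) {A : Finset (Fin p)} {j : Fin p} (i : Fin p) :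
    (S *ᵥ uVec S A j) i = S i j - ∑ s : A, ∑ t : A, S i s.1 * (subM S A)⁻¹ s t * S t.1 j := by
  have : S *ᵥ uVec S A j = S *ᵥ Pi.single j 1 + S *ᵥ pad A (wCoef S A j) := by
    unfold uVec
    rw [← mulVec_add]
    rfl
  rw [this]
  have h1 : (S *ᵥ Pi.single j 1) i = S i j := by
    rw [mulVec_single]; simp
  have h2 : (S *ᵥ pad A (wCoef S A j)) i = -∑ s : A, ∑ t : A, S i s.1 * (subM S A)⁻¹ s t * S t.1 j := by
    show (fun x => S i x) ⬝ᵥ pad A (wCoef S A j) = _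
    rw [show (fun x => S i x) ⬝ᵥ pad A (wCoef S A j) = ∑ x, S i x * pad A (wCoef S A j) x from rfl,
      sum_pad A (fun x => S i x) (wCoef S A j)]
    have heach : ∀ a : A, S i a.1 * wCoef S A j a
        = -∑ t : A, S i a.1 * (subM S A)⁻¹ a t * S t.1 j := by
      intro a
      unfold wCoef
      rw [mul_neg, Finset.mul_sum]
      congr 1
      exact Finset.sum_congr rfl (fun t _ => by ring)
    rw [Finset.sum_congr rfl (fun a _ => heach a), Finset.sum_neg_distrib]
  rw [Pi.add_apply, h1, h2]
  ring

lemma mulVec_uVec_mem (hS : S.PosDef) {A : Finset (Fin p)} {j : Fin p} (a : A) :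
    (S *ᵥ uVec S A j) a.1 = 0 := by
  rw [mulVec_uVec hS]
  have hinv : subM S A * (subM S A)⁻¹ = 1 :=
    Matrix.mul_nonsing_inv _ ((subM_posDef A hS).isUnit.map detMonoidHom)
  have : ∑ s : A, ∑ t : A, S a.1 s.1 * (subM S A)⁻¹ s t * S t.1 j = S a.1 j := by
    rw [Finset.sum_comm]
    have : ∀ t : A, ∑ s : A, S a.1 s.1 * (subM S A)⁻¹ s t * S t.1 j
        = (subM S A * (subM S A)⁻¹) a t * S t.1 j := by
      intro t
      rw [Matrix.mul_apply, Finset.sum_mul]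
      rfl
    rw [Finset.sum_congr rfl (fun t _ => this t), hinv]
    simp [Matrix.one_apply]
  rw [this]; ring

lemma mulVec_uVec_self (hS : S.PosDef) {A : Finset (Fin p)} {j : Fin p} :
    (S *ᵥ uVec S A j) j = condVar S j A := by
  rw [mulVec_uVec hS]
  rfl

lemma dot_uVec (hS : S.PosDef) {A : Finset (Fin p)} {j : Fin p} (hj : j ∉ A) :
    uVec S A j ⬝ᵥ (S *ᵥ uVec S A j) = condVar S j A := by
  show ∑ i, uVec S A j i * (S *ᵥ uVec S A j) i = _
  have : ∀ i, uVec S A j i * (S *ᵥ uVec S A j) i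
      = (Pi.single j 1 : Fin p → ℝ) i * (S *ᵥ uVec S A j) i + (S *ᵥ uVec S A j) i * pad A (wCoef S A j) i := by
    intro i; unfold uVec; ring
  rw [Finset.sum_congr rfl (fun i _ => this i), Finset.sum_add_distrib]
  have h1 : ∑ i, (Pi.single j 1 : Fin p → ℝ) i * (S *ᵥ uVec S A j) i = condVar S j A := by
    rw [Finset.sum_eq_single j]
    · simp [mulVec_uVec_self hS]
    · intro b _ hb; simp [Pi.single_apply, hb]
    · simp
  have h2 : ∑ i, (S *ᵥ uVec S A j) i * pad A (wCoef S A j) i = 0 := by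
    rw [sum_pad A (fun i => (S *ᵥ uVec S A j) i) (wCoef S A j)]
    apply Finset.sum_eq_zero
    intro a _
    rw [mulVec_uVec_mem hS a]
    ring
  rw [h1, h2, add_zero]

end Stmt10Aux

namespace Stmt10Aux

variable {p : ℕ} {S : Matrix (Fin p) (Fin p) ℝ}

lemma not_mem_PRED (σ : Equiv.Perm (Fin p)) (j : Fin p) : j ∉ PRED σ j := by
  simp [PRED]

lemma mem_PRED {σ : Equiv.Perm (Fin p)} {i j : Fin p} :
    i ∈ PRED σ j ↔ σ.symm i < σ.symm j := by simp [PRED]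

noncomputable def omega (S : Matrix (Fin p) (Fin p) ℝ) : Fin p → ℝ :=
  fun k => condVar S k (Finset.Iio k)

noncomputable def Umat (S : Matrix (Fin p) (Fin p) ℝ) : Matrix (Fin p) (Fin p) ℝ :=
  Matrix.of fun i k => uVec S (Finset.Iio k) k i

noncomputable def Vmat (S : Matrix (Fin p) (Fin p) ℝ) (σ : Equiv.Perm (Fin p)) :
    Matrix (Fin p) (Fin p) ℝ :=
  Matrix.of fun i j => uVec S (PRED σ j) j i

lemma Umat_diag (k : Fin p) : Umat S k k = 1 := uVec_self (by simp)

lemma Umat_tri : (Umat S).BlockTriangular id := by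
  intro i k h
  exact uVec_zero (fun hh => absurd hh (ne_of_gt h)) (by simp [Finset.mem_Iio]; exact le_of_lt h)

lemma Vmat_diag (σ : Equiv.Perm (Fin p)) (j : Fin p) : Vmat S σ j j = 1 :=
  uVec_self (not_mem_PRED σ j)

lemma Vmat_tri (σ : Equiv.Perm (Fin p)) : (Vmat S σ).BlockTriangular (fun i => σ.symm i) := by
  intro i j h
  refine uVec_zero (fun hh => ?_) (fun hmem => ?_)
  · rw [hh] at h; exact lt_irrefl _ h
  · rw [mem_PRED] at hmem
    exact absurd (hmem.trans h) (lt_irrefl _)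

lemma conj_apply (S : Matrix (Fin p) (Fin p) ℝ) (f g : Fin p → Fin p → ℝ) (j k : Fin p) :
    ((Matrix.of fun i j' => f j' i)ᵀ * S * (Matrix.of fun i j' => g j' i)) j k
      = f j ⬝ᵥ (S *ᵥ g k) := by
  simp only [Matrix.mul_apply, Matrix.transpose_apply, Matrix.of_apply, dotProduct, mulVec,
    Finset.sum_mul, Finset.mul_sum]
  rw [Finset.sum_comm]
  apply Finset.sum_congr rfl
  intro i _
  apply Finset.sum_congr rfl
  intro x _
  ring

lemma UtSU (hS : S.PosDef) : (Umat S)ᵀ * S * (Umat S) = Matrix.diagonal (omega S) := by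
  have key : ∀ j k : Fin p, j < k →
      ((Umat S)ᵀ * S * (Umat S)) j k = 0 := by
    intro j k hjk
    rw [show ((Umat S)ᵀ * S * (Umat S)) j k = _ from conj_apply S _ _ j k]
    apply Finset.sum_eq_zero
    intro i _
    by_cases hik : i < k
    · have := mulVec_uVec_mem hS (A := Finset.Iio k) (j := k) ⟨i, Finset.mem_Iio.mpr hik⟩
      simp only at this
      rw [this, mul_zero]
    · have : uVec S (Finset.Iio j) j i = 0 := by
        apply uVec_zero
        · intro hh; rw [hh] at hik; exact hik hjk
        · simp only [Finset.mem_Iio]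
          intro hh; exact hik (hh.trans hjk)
      rw [this, zero_mul]
  have hsymm : ((Umat S)ᵀ * S * (Umat S))ᵀ = (Umat S)ᵀ * S * (Umat S) := by
    have hSt : Sᵀ = S := by
      ext i j; exact symmApp hS.1 j i
    rw [Matrix.transpose_mul, Matrix.transpose_mul, Matrix.transpose_transpose, hSt,
      ← Matrix.mul_assoc]
  ext j k
  rcases lt_trichotomy j k with h | h | h
  · rw [key j k h, Matrix.diagonal_apply_ne _ (ne_of_lt h)]
  · subst h
    rw [Matrix.diagonal_apply_eq]
    rw [show ((Umat S)ᵀ * S * (Umat S)) j j = _ from conj_apply S _ _ j j]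
    exact dot_uVec hS (by simp)
  · have := congrFun (congrFun hsymm k) j
    rw [Matrix.transpose_apply] at this
    rw [this, key k j h, Matrix.diagonal_apply_ne _ (ne_of_gt h)]

lemma VtSV_diag (hS : S.PosDef) (σ : Equiv.Perm (Fin p)) (j : Fin p) :
    ((Vmat S σ)ᵀ * S * (Vmat S σ)) j j = condVar S j (PRED σ j) := by
  rw [show ((Vmat S σ)ᵀ * S * (Vmat S σ)) j j = _ from conj_apply S _ _ j j]
  exact dot_uVec hS (not_mem_PRED σ j)

end Stmt10Aux

namespace Stmt10Aux

lemma trace_eq_sum_eigenvalues {ι : Type*} [Fintype ι] [DecidableEq ι]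
    {P : Matrix ι ι ℝ} (hH : P.IsHermitian) : P.trace = ∑ i, hH.eigenvalues i := by
  conv_lhs => rw [hH.spectral_theorem]
  rw [Unitary.conjStarAlgAut_apply]
  rw [Matrix.trace_mul_cycle]
  have hu : (star (hH.eigenvectorUnitary : Matrix ι ι ℝ)) * (hH.eigenvectorUnitary : Matrix ι ι ℝ) = 1 := by
    exact Unitary.coe_star_mul_self hH.eigenvectorUnitary
  rw [hu, Matrix.one_mul, Matrix.trace_diagonal]
  simp

lemma frob {ι : Type*} [Fintype ι] [DecidableEq ι] (B : Matrix ι ι ℝ) (hdet : B.det = 1) :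
    (Fintype.card ι : ℝ) ≤ ∑ i, ∑ j, (B i j) ^ 2 := by
  rcases Nat.eq_zero_or_pos (Fintype.card ι) with h0 | hpos
  · rw [h0]
    push_cast
    exact Finset.sum_nonneg fun i _ => Finset.sum_nonneg fun j _ => sq_nonneg _
  set P := Bᴴ * B with hPdef
  have hP : P.PosSemidef := Matrix.posSemidef_conjTranspose_mul_self B
  have hH : P.IsHermitian := hP.1
  have hev : ∀ i, 0 ≤ hH.eigenvalues i := hP.eigenvalues_nonneg
  have hprod : ∏ i, hH.eigenvalues i = 1 := by
    have : P.det = ∏ i, hH.eigenvalues i := by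
      have := hH.det_eq_prod_eigenvalues
      simpa using this
    rw [← this, hPdef, Matrix.det_mul, Matrix.det_conjTranspose, hdet]
    simp
  have htr : P.trace = ∑ i, ∑ j, (B i j) ^ 2 := by
    rw [Matrix.trace, Finset.sum_comm]
    apply Finset.sum_congr rfl
    intro j _
    rw [Matrix.diag_apply, hPdef, Matrix.mul_apply]
    apply Finset.sum_congr rfl
    intro i _
    rw [Matrix.conjTranspose_apply]
    simp [sq]
  -- AM-GM
  set n := Fintype.card ι
  have hw : ∀ i ∈ (Finset.univ : Finset ι), (0:ℝ) ≤ 1 / n := by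
    intro i _
    positivity
  have hwsum : ∑ _i : ι, (1:ℝ)/n = 1 := by
    rw [Finset.sum_const, Finset.card_univ, nsmul_eq_mul]
    have : (n:ℝ) ≠ 0 := Nat.cast_ne_zero.mpr hpos.ne'
    field_simp
    rfl
  have hgm := Real.geom_mean_le_arith_mean_weighted Finset.univ (fun _ => (1:ℝ)/n)
    hH.eigenvalues hw hwsum (fun i _ => hev i)
  have hlhs : ∏ i, hH.eigenvalues i ^ ((1:ℝ)/n) = 1 := by
    rw [Real.finset_prod_rpow _ _ (fun i _ => hev i), hprod, Real.one_rpow]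
  rw [hlhs] at hgm
  have : ∑ i, (1:ℝ)/n * hH.eigenvalues i = (1/n) * P.trace := by
    rw [trace_eq_sum_eigenvalues hH, Finset.mul_sum]
  rw [this] at hgm
  rw [← htr]
  have hn : (0:ℝ) < n := by exact_mod_cast hpos
  calc (n:ℝ) = n * 1 := by ring
    _ ≤ n * ((1/n) * P.trace) := by
        apply mul_le_mul_of_nonneg_left hgm (le_of_lt hn)
    _ = P.trace := by field_simp

end Stmt10Aux

namespace Stmt10Aux

lemma det_tri' {ι : Type*} [Fintype ι] [DecidableEq ι] {β : Type*} [LinearOrder β]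
    (b : ι → β) (hb : Function.Injective b) (M : Matrix ι ι ℝ)
    (h : ∀ i j, b j < b i → M i j = 0) : M.det = ∏ i, M i i := by
  letI : LinearOrder ι := LinearOrder.lift' b hb
  exact Matrix.det_of_upperTriangular (fun i j hij => h i j hij)

end Stmt10Aux

namespace Stmt10Aux

variable {p : ℕ} {S : Matrix (Fin p) (Fin p) ℝ}

lemma Umat_det : (Umat S).det = 1 := by
  rw [Matrix.det_of_upperTriangular (Umat_tri (S := S))]
  simp [Umat_diag]

lemma Umat_isUnit : IsUnit (Umat S).det := by rw [Umat_det]; exact isUnit_one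

lemma Uinv_mul : (Umat S)⁻¹ * Umat S = 1 := Matrix.nonsing_inv_mul _ Umat_isUnit

lemma Uinv_tri : ((Umat S)⁻¹).BlockTriangular id := by
  haveI := (Umat S).invertibleOfIsUnitDet Umat_isUnit
  exact Matrix.blockTriangular_inv_of_blockTriangular (Umat_tri (S := S))

lemma Uinv_diag (k : Fin p) : (Umat S)⁻¹ k k = 1 := by
  have h := congrFun (congrFun (Uinv_mul (S := S)) k) k
  rw [Matrix.mul_apply, Matrix.one_apply_eq] at h
  rw [Finset.sum_eq_single k] at h
  · rw [Umat_diag, mul_one] at h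
    exact h
  · intro i _ hik
    rcases lt_or_gt_of_ne hik with hlt | hgt
    · rw [Uinv_tri (show id i < id k from hlt), zero_mul]
    · rw [Umat_tri (show id k < id i from hgt), mul_zero]
  · simp

noncomputable def Amat (S : Matrix (Fin p) (Fin p) ℝ) (σ : Equiv.Perm (Fin p)) :
    Matrix (Fin p) (Fin p) ℝ := (Umat S)⁻¹ * Vmat S σ

lemma U_mul_Amat (σ : Equiv.Perm (Fin p)) : Umat S * Amat S σ = Vmat S σ := by
  rw [Amat, ← Matrix.mul_assoc, Matrix.mul_nonsing_inv _ Umat_isUnit, Matrix.one_mul]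

lemma sum_sigma_eq (hS : S.PosDef) (σ : Equiv.Perm (Fin p)) :
    ∑ j, condVar S j (PRED σ j) = ∑ k, omega S k * ∑ j, (Amat S σ k j) ^ 2 := by
  have hVSV : (Vmat S σ)ᵀ * S * Vmat S σ
      = (Amat S σ)ᵀ * Matrix.diagonal (omega S) * Amat S σ := by
    conv_lhs => rw [← U_mul_Amat σ]
    rw [Matrix.transpose_mul]
    rw [show (Amat S σ)ᵀ * (Umat S)ᵀ * S * (Umat S * Amat S σ)
        = (Amat S σ)ᵀ * ((Umat S)ᵀ * S * Umat S) * Amat S σ from by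
      simp only [Matrix.mul_assoc]]
    rw [UtSU hS]
  have hentry : ∀ j, condVar S j (PRED σ j)
      = ∑ k, omega S k * (Amat S σ k j) ^ 2 := by
    intro j
    rw [← VtSV_diag hS σ j, hVSV, Matrix.mul_apply]
    apply Finset.sum_congr rfl
    intro k _
    rw [Matrix.mul_apply, Finset.sum_mul]
    rw [Finset.sum_eq_single k]
    · rw [Matrix.transpose_apply, Matrix.diagonal_apply_eq]
      ring
    · intro i _ hik
      rw [Matrix.diagonal_apply_ne _ hik, mul_zero, zero_mul]
    · simp
  rw [Finset.sum_congr rfl (fun j _ => hentry j), Finset.sum_comm]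
  apply Finset.sum_congr rfl
  intro k _
  rw [Finset.mul_sum]

lemma partial_bound (σ : Equiv.Perm (Fin p)) (k₀ : Fin p) :
    (p : ℝ) - (k₀ : ℕ) ≤ ∑ k ∈ Finset.Ici k₀, ∑ j, (Amat S σ k j) ^ 2 := by
  classical
  set K := Finset.Ici k₀ with hK
  have memK : ∀ i : K, k₀ ≤ i.1 := fun i => Finset.mem_Ici.mp i.2
  set B1 : Matrix K K ℝ := Matrix.of fun i j : K => (Umat S)⁻¹ i.1 j.1 with hB1
  set B2 : Matrix K K ℝ := Matrix.of fun i j : K => Vmat S σ i.1 j.1 with hB2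
  set B : Matrix K K ℝ := Matrix.of fun i j : K => Amat S σ i.1 j.1 with hB
  have hBmul : B = B1 * B2 := by
    ext k j
    rw [hB, Matrix.of_apply, Amat, Matrix.mul_apply, Matrix.mul_apply]
    have hvanish : ∀ i ∈ Finset.univ, i ∉ K → (Umat S)⁻¹ k.1 i * Vmat S σ i j.1 = 0 := by
      intro i _ hiK
      rw [hK, Finset.mem_Ici, not_le] at hiK
      rw [Uinv_tri (show id i < id k.1 from lt_of_lt_of_le hiK (memK k)), zero_mul]
    rw [← Finset.sum_subset (K.subset_univ) hvanish,
      ← Finset.sum_coe_sort K (fun i => (Umat S)⁻¹ k.1 i * Vmat S σ i j.1)]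
    rfl
  have hdetB1 : B1.det = 1 := by
    rw [det_tri' (fun i : K => i.1) Subtype.coe_injective B1
      (fun i j hij => Uinv_tri (show id j.1 < id i.1 from hij))]
    apply Finset.prod_eq_one
    intro i _
    rw [hB1, Matrix.of_apply, Uinv_diag]
  have hdetB2 : B2.det = 1 := by
    rw [det_tri' (fun i : K => σ.symm i.1) ((Equiv.injective σ.symm).comp Subtype.coe_injective)
      B2 (fun i j hij => Vmat_tri σ hij)]
    apply Finset.prod_eq_one
    intro i _
    rw [hB2, Matrix.of_apply, Vmat_diag]
  have hdetB : B.det = 1 := by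
    rw [hBmul, Matrix.det_mul, hdetB1, hdetB2, mul_one]
  have hfrob := frob B hdetB
  have hcard : (Fintype.card K : ℝ) = (p : ℝ) - (k₀ : ℕ) := by
    rw [Fintype.card_coe, hK, Fin.card_Ici, Nat.cast_sub (le_of_lt k₀.isLt)]
  rw [hcard] at hfrob
  refine le_trans hfrob ?_
  rw [← Finset.sum_coe_sort K (fun k => ∑ j, (Amat S σ k j) ^ 2)]
  apply Finset.sum_le_sum
  intro k _
  rw [show ∑ j : K, B k j ^ 2 = ∑ j ∈ K, (Amat S σ k.1 j) ^ 2 from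
    Finset.sum_coe_sort K (fun j => (Amat S σ k.1 j) ^ 2)]
  exact Finset.sum_le_sum_of_subset_of_nonneg (K.subset_univ)
    (fun j _ _ => sq_nonneg _)

end Stmt10Aux

namespace Stmt10Aux

lemma abel (P : ℕ) (W C : ℕ → ℝ) (hW : Monotone W) (hW0 : 0 ≤ W 0)
    (hC : ∀ n, n ≤ P → (n : ℝ) ≤ ∑ l ∈ Finset.Ico (P - n) P, C l) :
    ∑ l ∈ Finset.Ico 0 P, W l ≤ ∑ l ∈ Finset.Ico 0 P, W l * C l := by
  have aux : ∀ n, n ≤ P →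
      ∑ l ∈ Finset.Ico (P - n) P, W l
        + W (P - n) * ((∑ l ∈ Finset.Ico (P - n) P, C l) - n)
      ≤ ∑ l ∈ Finset.Ico (P - n) P, (W l * C l) := by
    intro n
    induction n with
    | zero => intro _; simp
    | succ n ih =>
      intro hn1
      have hn : n ≤ P := by omega
      have ih' := ih hn
      have hk1 : P - n = (P - (n+1)) + 1 := by omega
      set k := P - (n + 1) with hk
      have hklt : k < P := by omega
      rw [hk1] at ih'
      have hC' := hC n hn
      rw [hk1] at hC'
      have hWk := hW (Nat.le_succ k)
      rw [Finset.sum_eq_sum_Ico_succ_bot hklt W, Finset.sum_eq_sum_Ico_succ_bot hklt C,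
        Finset.sum_eq_sum_Ico_succ_bot hklt (fun l => W l * C l)]
      have hmul := mul_le_mul_of_nonneg_right hWk (sub_nonneg.mpr hC')
      push_cast
      nlinarith [ih', hmul]
  have h0 := aux P le_rfl
  rw [Nat.sub_self] at h0
  have hs := hC P le_rfl
  rw [Nat.sub_self] at hs
  nlinarith [h0, mul_nonneg hW0 (sub_nonneg.mpr hs)]

end Stmt10Aux

namespace Stmt10Aux

variable {p : ℕ} {S : Matrix (Fin p) (Fin p) ℝ}

lemma omega_nonneg (hS : S.PosDef) (k : Fin p) : 0 ≤ omega S k := by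
  rw [omega, ← dot_uVec hS (by simp : k ∉ Finset.Iio k)]
  have := hS.posSemidef.dotProduct_mulVec_nonneg (uVec S (Finset.Iio k) k)
  simpa using this

lemma sum_Ici_eq (g : Fin p → ℝ) (k : Fin p) :
    ∑ i ∈ Finset.Ici k, g i
      = ∑ l ∈ Finset.Ico (k : ℕ) p, (if h : l < p then g ⟨l, h⟩ else 0) := by
  refine Finset.sum_bij' (fun a _ => (a : ℕ)) (fun b hb => ⟨b, (Finset.mem_Ico.mp hb).2⟩)
    ?_ ?_ ?_ ?_ ?_
  · intro a ha
    have hmem : k ≤ a := Finset.mem_Ici.mp ha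
    rw [Finset.mem_Ico]
    exact ⟨hmem, a.isLt⟩
  · intro b hb
    have hmem : (k : ℕ) ≤ b := (Finset.mem_Ico.mp hb).1
    rw [Finset.mem_Ici]
    exact hmem
  · intro a _; exact Fin.eta a a.isLt
  · intro b _; rfl
  · intro a _
    rw [dif_pos a.isLt, Fin.eta]

end Stmt10Aux

open Stmt10Aux

/-- If the error variances `ω_j^ι = Var(X_j | X_1, …, X_{j-1})` under the identity
ordering `ι` are weakly increasing, then the identity ordering minimizes the trace of
the error-variance matrix: for every permutation `σ`, `∑_j ω_j^ι ≤ ∑_j ω_j^σ`. -/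
theorem stmt10 {p : ℕ} (S : Matrix (Fin p) (Fin p) ℝ) (hS : S.PosDef)
    (hmono : Monotone fun j => condVar S j (Finset.Iio j))
    (σ : Equiv.Perm (Fin p)) :
    ∑ j, condVar S j (Finset.Iio j) ≤ ∑ j, condVar S j (PRED σ j) := by
  classical
  rcases Nat.eq_zero_or_pos p with hp0 | hp
  · subst hp0
    simp
  set W : ℕ → ℝ := fun n => omega S ⟨min n (p-1), by omega⟩ with hW
  set C : ℕ → ℝ := fun n => if h : n < p then ∑ j, (Amat S σ ⟨n, h⟩ j) ^ 2 else 0 with hC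
  have hWmono : Monotone W := by
    intro a b hab
    exact hmono (show (⟨min a (p-1), _⟩ : Fin p) ≤ ⟨min b (p-1), _⟩ from by
      simp only [Fin.mk_le_mk]
      exact min_le_min hab le_rfl)
  have hW0 : 0 ≤ W 0 := omega_nonneg hS _
  have hCb : ∀ n, n ≤ p → (n : ℝ) ≤ ∑ l ∈ Finset.Ico (p - n) p, C l := by
    intro n hn
    rcases Nat.eq_zero_or_pos n with h0 | hnpos
    · subst h0; simp
    have hklt : p - n < p := by omega
    have hpb := partial_bound (S := S) σ (⟨p - n, hklt⟩ : Fin p)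
    have hcast : ((p : ℝ) - ((⟨p - n, hklt⟩ : Fin p) : ℕ)) = (n : ℝ) := by
      simp only [Fin.val_mk]
      rw [Nat.cast_sub hn]
      ring
    rw [hcast] at hpb
    refine le_trans hpb (le_of_eq ?_)
    rw [sum_Ici_eq (fun k => ∑ j, (Amat S σ k j) ^ 2) ⟨p - n, hklt⟩]
  have habel := abel p W C hWmono hW0 hCb
  have hL : ∑ j, condVar S j (Finset.Iio j) = ∑ l ∈ Finset.Ico 0 p, W l := by
    rw [← Finset.range_eq_Ico, ← Fin.sum_univ_eq_sum_range (fun l => W l) p]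
    apply Finset.sum_congr rfl
    intro j _
    have : (⟨min (j : ℕ) (p-1), by have := j.isLt; omega⟩ : Fin p) = j := by
      apply Fin.ext
      simp only [Fin.val_mk]
      have := j.isLt
      omega
    simp only [hW, this]
    rfl
  have hR : ∑ j, condVar S j (PRED σ j) = ∑ l ∈ Finset.Ico 0 p, W l * C l := by
    rw [sum_sigma_eq hS σ, ← Finset.range_eq_Ico,
      ← Fin.sum_univ_eq_sum_range (fun l => W l * C l) p]
    apply Finset.sum_congr rfl
    intro k _
    have h1 : W (k : ℕ) = omega S k := by
      have : (⟨min (k : ℕ) (p-1), by have := k.isLt; omega⟩ : Fin p) = k := by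
        apply Fin.ext
        simp only [Fin.val_mk]
        have := k.isLt
        omega
      simp only [hW, this]
    have h2 : C (k : ℕ) = ∑ j, (Amat S σ k j) ^ 2 := by
      simp only [hC, dif_pos k.isLt, Fin.eta]
    rw [h1, h2]
  rw [hL, hR]
  exact habel
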